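/- Let Δ : U^d → S and Θ : V^d → T be nondegenerate multilinear maps. If Δ and Θ are symmetrically equivalent via bijections φ_1,...,φ_d and ψ, then the map Ψ : Z(U,S,Δ) → Z(V,T,Θ) given by Ψ(φ) = φ_1 ∘ φ ∘ φ_1⁻¹ is a well-defined isomorphism of k-algebras. -/
import Mathlib

open Function

/-- The center condition: `φ` is self-adjoint with respect to the multilinear map `Θ`
in every pair of slots. -/
def InCenter {k : Type*} [Field k] {d : ℕ} {V T : Type*} [AddCommGroup V] [Module k V]
    [AddCommGroup T] [Module k T]
    (Θ : MultilinearMap k (fun _ : Fin d => V) T) (φ : V →ₗ[k] V) : Prop :=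
  ∀ (i j : Fin d) (v : Fin d → V),
    Θ (Function.update v i (φ (v i))) = Θ (Function.update v j (φ (v j)))

/-- Nondegeneracy of a multilinear map: the only vector annihilating it in some slot
against all others is `0`. -/
def Nondeg {k : Type*} [Field k] {d : ℕ} {V T : Type*} [AddCommGroup V] [Module k V]
    [AddCommGroup T] [Module k T]
    (Θ : MultilinearMap k (fun _ : Fin d => V) T) : Prop :=
  ∀ u : V, (∀ (i : Fin d) (v : Fin d → V), Θ (Function.update v i u) = 0) → u = 0

lemma center_forward {k : Type*} [Field k] {d : ℕ} (hd : 3 ≤ d)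
    {U V S T : Type*} [AddCommGroup U] [Module k U]
    [AddCommGroup V] [Module k V]
    [AddCommGroup S] [Module k S]
    [AddCommGroup T] [Module k T]
    (Δ : MultilinearMap k (fun _ : Fin d => U) S)
    (Θ : MultilinearMap k (fun _ : Fin d => V) T)
    (φ : Fin d → (U ≃ₗ[k] V)) (ψ : S ≃ₗ[k] T)
    (hequiv : ∀ (σ : Equiv.Perm (Fin d)) (u : Fin d → U),
      ψ (Δ u) = Θ (fun m => φ (σ m) (u m)))
    (a : Fin d) (φ₀ : U →ₗ[k] U) (hc : InCenter Δ φ₀) :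
    InCenter Θ ((φ a).toLinearMap ∘ₗ φ₀ ∘ₗ (φ a).symm.toLinearMap) := by
  have avoid2 : ∀ b c : Fin d, ∃ e : Fin d, e ≠ b ∧ e ≠ c := by
    intro b c
    have h2 : ({b, c} : Finset (Fin d)).card ≤ 2 := by
      have := Finset.card_insert_le b ({c} : Finset (Fin d))
      simpa using this
    have h3 : (({b, c} : Finset (Fin d))ᶜ).Nonempty := by
      rw [← Finset.card_pos, Finset.card_compl, Fintype.card_fin]
      omega
    obtain ⟨e, he⟩ := h3
    simp only [Finset.mem_compl, Finset.mem_insert, Finset.mem_singleton, not_or] at he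
    exact ⟨e, he.1, he.2⟩
  have key : ∀ (σ : Equiv.Perm (Fin d)) (i j : Fin d) (v : Fin d → V),
      Θ (update v i ((φ (σ i)) (φ₀ ((φ (σ i)).symm (v i))))) =
      Θ (update v j ((φ (σ j)) (φ₀ ((φ (σ j)).symm (v j))))) := by
    intro σ i j v
    set u : Fin d → U := fun m => (φ (σ m)).symm (v m) with hu
    have h1 : ∀ l : Fin d, (fun m => φ (σ m) ((update u l (φ₀ (u l))) m)) =
        update v l ((φ (σ l)) (φ₀ ((φ (σ l)).symm (v l)))) := by
      intro l; funext m
      rcases eq_or_ne m l with rfl | hm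
      · simp [hu]
      · simp [hm, hu]
    calc Θ (update v i ((φ (σ i)) (φ₀ ((φ (σ i)).symm (v i)))))
        = ψ (Δ (update u i (φ₀ (u i)))) := by rw [hequiv σ, h1 i]
      _ = ψ (Δ (update u j (φ₀ (u j)))) := by rw [hc i j]
      _ = Θ (update v j ((φ (σ j)) (φ₀ ((φ (σ j)).symm (v j))))) := by
            rw [hequiv σ, h1 j]
  have keyB : ∀ (b c i j : Fin d), b ≠ c → i ≠ j → ∀ v : Fin d → V,
      Θ (update v i ((φ b) (φ₀ ((φ b).symm (v i))))) =
      Θ (update v j ((φ c) (φ₀ ((φ c).symm (v j))))) := by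
    intro b c i j hbc hij v
    set σ : Equiv.Perm (Fin d) := (Equiv.swap (Equiv.swap i b j) c) * (Equiv.swap i b)
      with hσ
    have h1 : Equiv.swap i b j ≠ b := by
      intro h
      apply hij
      have := congrArg (Equiv.swap i b) h
      simpa using this.symm
    have hσi : σ i = b := by
      simp only [hσ, Equiv.Perm.mul_apply, Equiv.swap_apply_left]
      exact Equiv.swap_apply_of_ne_of_ne h1.symm hbc
    have hσj : σ j = c := by
      simp only [hσ, Equiv.Perm.mul_apply]
      rw [Equiv.swap_apply_left]
    have := key σ i j v
    rwa [hσi, hσj] at this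
  have keyC : ∀ (b c j : Fin d), b ≠ c → ∀ v : Fin d → V,
      Θ (update v j ((φ b) (φ₀ ((φ b).symm (v j))))) =
      Θ (update v j ((φ c) (φ₀ ((φ c).symm (v j))))) := by
    intro b c j hbc v
    obtain ⟨i, hij, -⟩ := avoid2 j j
    obtain ⟨e, heb, hec⟩ := avoid2 b c
    calc Θ (update v j ((φ b) (φ₀ ((φ b).symm (v j)))))
        = Θ (update v i ((φ e) (φ₀ ((φ e).symm (v i))))) :=
          keyB b e j i heb.symm hij.symm v
      _ = Θ (update v j ((φ c) (φ₀ ((φ c).symm (v j))))) :=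
          keyB e c i j hec hij v
  intro i j v
  simp only [LinearMap.coe_comp, comp_apply, LinearEquiv.coe_coe]
  rcases eq_or_ne i j with rfl | hij
  · rfl
  · obtain ⟨e, hea, -⟩ := avoid2 a a
    calc Θ (update v i ((φ a) (φ₀ ((φ a).symm (v i)))))
        = Θ (update v j ((φ e) (φ₀ ((φ e).symm (v j))))) :=
          keyB a e i j hea.symm hij v
      _ = Θ (update v j ((φ a) (φ₀ ((φ a).symm (v j))))) :=
          keyC e a j hea v

/-- a symmetric equivalence between nondegenerate multilinear maps
induces an isomorphism of centers `Ψ(φ₀) = φ₁ ∘ φ₀ ∘ φ₁⁻¹`: conjugation by `φ₁` maps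
`Z(U,S,Δ)` bijectively onto `Z(V,T,Θ)` (and being an algebra map, it is a `k`-algebra
isomorphism between the centers). -/
theorem symEquiv_center_isomorphism {k : Type*} [Field k] {d : ℕ} (hd : 3 ≤ d)
    {U V S T : Type*} [AddCommGroup U] [Module k U] [FiniteDimensional k U]
    [AddCommGroup V] [Module k V] [FiniteDimensional k V]
    [AddCommGroup S] [Module k S] [FiniteDimensional k S]
    [AddCommGroup T] [Module k T] [FiniteDimensional k T]
    (Δ : MultilinearMap k (fun _ : Fin d => U) S)
    (Θ : MultilinearMap k (fun _ : Fin d => V) T)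
    (hΔ : Nondeg Δ) (hΘ : Nondeg Θ)
    (φ : Fin d → (U ≃ₗ[k] V)) (ψ : S ≃ₗ[k] T)
    (hequiv : ∀ (σ : Equiv.Perm (Fin d)) (u : Fin d → U),
      ψ (Δ u) = Θ (fun m => φ (σ m) (u m))) :
    ∀ φ₀ : U →ₗ[k] U,
      InCenter Δ φ₀ ↔
        InCenter Θ ((φ ⟨0, by omega⟩).toLinearMap ∘ₗ φ₀ ∘ₗ
          (φ ⟨0, by omega⟩).symm.toLinearMap) := by
  intro φ₀
  set i0 : Fin d := ⟨0, by omega⟩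
  constructor
  · exact center_forward hd Δ Θ φ ψ hequiv i0 φ₀
  · intro h
    have hequiv' : ∀ (σ : Equiv.Perm (Fin d)) (v : Fin d → V),
        ψ.symm (Θ v) = Δ (fun m => (φ (σ m)).symm (v m)) := by
      intro σ v
      have := hequiv σ (fun m => (φ (σ m)).symm (v m))
      simp only [LinearEquiv.apply_symm_apply] at this
      rw [← this, LinearEquiv.symm_apply_apply]
    have h2 := center_forward hd Θ Δ (fun m => (φ m).symm) ψ.symm hequiv' i0
      ((φ i0).toLinearMap ∘ₗ φ₀ ∘ₗ (φ i0).symm.toLinearMap) h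
    have heq : ((φ i0).symm.toLinearMap ∘ₗ
        ((φ i0).toLinearMap ∘ₗ φ₀ ∘ₗ (φ i0).symm.toLinearMap) ∘ₗ
        (φ i0).symm.symm.toLinearMap) = φ₀ := by
      ext x; simp
    rwa [heq] at h2
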